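/- arXiv:2009.04910 — 3 statements merged into one kernel-verified Lean document; each statement's English description precedes it below -/
import Mathlib

section
/- Let κ ∈ (0,1), λ = √(1-κ²). Suppose on a neighborhood of 0 ∈ ℝ the analytic functions φ and ψ satisfy φ(0)=ψ(0)=0, sin ψ = κ sin φ, and φ is the inverse of f(T) = ∫₀^T F(1/4,3/4;1/2; κ² sin²t) dt. Then d = cos ∘ ψ satisfies d(0)=1 and (d')² = 2(1-d)(d² - λ²). -/
open Real

noncomputable def hyp (a b c x : ℝ) : ℝ :=
  ∑' n : ℕ, ((∏ i ∈ Finset.range n, (a + i)) * (∏ i ∈ Finset.range n, (b + i)) /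
    ((∏ i ∈ Finset.range n, (c + i)) * (n.factorial : ℝ))) * x ^ n

noncomputable def binCoeff (n : ℕ) : ℝ :=
  (∏ i ∈ Finset.range n, ((1:ℝ)/2 + i)) / n.factorial

lemma binCoeff_pos (n : ℕ) : 0 < binCoeff n := by
  apply div_pos
  · exact Finset.prod_pos fun i _ => by positivity
  · exact_mod_cast n.factorial_pos

lemma binCoeff_zero : binCoeff 0 = 1 := by simp [binCoeff]

lemma binCoeff_succ (n : ℕ) :
    2 * (n+1 : ℝ) * binCoeff (n+1) = (2*n+1) * binCoeff n := by
  have h1 : ((n+1).factorial : ℝ) = (n+1) * n.factorial := by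
    push_cast [Nat.factorial_succ]; ring
  have h2 : (∏ i ∈ Finset.range (n+1), ((1:ℝ)/2 + i)) =
      (∏ i ∈ Finset.range n, ((1:ℝ)/2 + i)) * (1/2 + n) := Finset.prod_range_succ _ _
  have hf : (n.factorial : ℝ) ≠ 0 := by exact_mod_cast n.factorial_ne_zero
  have hn1 : ((n:ℝ)+1) ≠ 0 := by positivity
  simp only [binCoeff, h1, h2]
  field_simp
  ring

lemma binCoeff_le_one (n : ℕ) : binCoeff n ≤ 1 := by
  induction n with
  | zero => simp [binCoeff_zero]
  | succ n ih =>
    have h := binCoeff_succ n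
    have hp := binCoeff_pos n
    nlinarith

lemma summable_binCoeff {y : ℝ} (hy : |y| < 1) :
    Summable (fun n => binCoeff n * y ^ n) := by
  apply Summable.of_norm_bounded (summable_geometric_of_lt_one (abs_nonneg y) hy)
  intro n
  rw [norm_mul, norm_pow]
  calc ‖binCoeff n‖ * |y| ^ n ≤ 1 * |y| ^ n := by
        apply mul_le_mul_of_nonneg_right _ (by positivity)
        rw [Real.norm_eq_abs, abs_of_pos (binCoeff_pos n)]
        exact binCoeff_le_one n
    _ = |y| ^ n := one_mul _

noncomputable def binSum (y : ℝ) : ℝ := ∑' n : ℕ, binCoeff n * y ^ n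
noncomputable def binDeriv (y : ℝ) : ℝ := ∑' n : ℕ, binCoeff n * ((n : ℝ) * y ^ (n-1))

lemma summable_binDeriv {y : ℝ} (hy : |y| < 1) :
    Summable (fun n => binCoeff n * ((n:ℝ) * y ^ (n-1))) := by
  set r : ℝ := (1 + |y|)/2 with hr
  have hr0 : 0 < r := by positivity
  have hr1 : r < 1 := by simp only [hr]; linarith
  have hyr : |y| ≤ r := by simp only [hr]; linarith
  have hsum : Summable (fun n : ℕ => r⁻¹ * ((n:ℝ)^1 * r ^ n)) :=
    (summable_pow_mul_geometric_of_norm_lt_one (R := ℝ) 1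
      (by rwa [Real.norm_eq_abs, abs_of_pos hr0])).mul_left _
  apply Summable.of_norm_bounded hsum
  intro n
  rw [Real.norm_eq_abs, abs_mul, abs_of_pos (binCoeff_pos n), abs_mul,
    Nat.abs_cast, abs_pow]
  calc binCoeff n * ((n:ℝ) * |y| ^ (n-1)) ≤ 1 * ((n:ℝ) * r ^ (n-1)) := by
        apply mul_le_mul (binCoeff_le_one n) _ (by positivity) (by norm_num)
        exact mul_le_mul_of_nonneg_left (pow_le_pow_left₀ (abs_nonneg y) hyr _) n.cast_nonneg
    _ ≤ r⁻¹ * ((n:ℝ)^1 * r ^ n) := by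
        rcases n with _ | m
        · simp
        · rw [one_mul, pow_one]
          have : r ^ (m + 1 - 1) = r⁻¹ * r ^ (m+1) := by
            rw [pow_succ]; field_simp; simp
          rw [this]; ring_nf; rfl

lemma hasDerivAt_binSum {y : ℝ} (hy : |y| < 1) :
    HasDerivAt binSum (binDeriv y) y := by
  set r : ℝ := (1 + |y|)/2 with hr
  have hr0 : 0 < r := by positivity
  have hr1 : r < 1 := by simp only [hr]; linarith
  have hyr : |y| < r := by simp only [hr]; linarith
  have hmem : y ∈ Set.Ioo (-r) r := abs_lt.mp hyr
  have h0 : (0:ℝ) ∈ Set.Ioo (-r) r := by constructor <;> simp [hr0] <;> linarith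
  have key := hasDerivAt_tsum_of_isPreconnected
    (u := fun n => binCoeff n * ((n:ℝ) * r ^ (n-1)))
    (g := fun n z => binCoeff n * z ^ n)
    (g' := fun n z => binCoeff n * ((n:ℝ) * z ^ (n-1)))
    (summable_binDeriv (by rwa [abs_of_pos hr0]))
    isOpen_Ioo isPreconnected_Ioo
    (fun n z _ => (hasDerivAt_pow n z).const_mul (binCoeff n))
    (fun n z hz => by
      have hz' : |z| ≤ r := le_of_lt (abs_lt.mpr ⟨hz.1, hz.2⟩)
      rw [Real.norm_eq_abs, abs_mul, abs_of_pos (binCoeff_pos n), abs_mul,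
        Nat.abs_cast, abs_pow]
      apply mul_le_mul_of_nonneg_left _ (binCoeff_pos n).le
      exact mul_le_mul_of_nonneg_left (pow_le_pow_left₀ (abs_nonneg z) hz' _) n.cast_nonneg)
    h0 (summable_binCoeff (by simpa using hr0)) hmem
  exact key

lemma ode_binSum {y : ℝ} (hy : |y| < 1) :
    2 * (1 - y) * binDeriv y = binSum y := by
  have h1 : HasSum (fun n => binCoeff n * ((n:ℝ) * y ^ (n-1))) (binDeriv y) :=
    (summable_binDeriv hy).hasSum
  have h1' : HasSum (fun n => binCoeff (n+1) * (((n:ℕ)+1:ℝ) * y ^ n)) (binDeriv y) := by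
    have := (hasSum_nat_add_iff' (f := fun n => binCoeff n * ((n:ℝ) * y ^ (n-1))) 1).2 h1
    simpa using this
  have h2 : HasSum (fun n => 2 * (binCoeff (n+1) * (((n:ℕ)+1:ℝ) * y ^ n)))
      (2 * binDeriv y) := h1'.mul_left 2
  have h3 : HasSum (fun n => 2 * y * (binCoeff n * ((n:ℝ) * y ^ (n-1))))
      (2 * y * binDeriv y) := h1.mul_left _
  have h4 := h2.sub h3
  have h5 : (fun n => 2 * (binCoeff (n+1) * (((n:ℕ)+1:ℝ) * y ^ n))
      - 2 * y * (binCoeff n * ((n:ℝ) * y ^ (n-1)))) = fun n => binCoeff n * y ^ n := by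
    funext n
    have hrec := binCoeff_succ n
    rcases n with _ | m
    · simp [binCoeff_zero] at hrec ⊢; linarith
    · push_cast at hrec ⊢
      linear_combination y^(m+1) * hrec
  rw [h5] at h4
  have h6 := (summable_binCoeff hy).hasSum
  have := h4.unique h6
  rw [binSum]
  linear_combination this

lemma binSum_zero : binSum 0 = 1 := by
  rw [binSum, tsum_eq_single 0 (fun n hn => by simp [zero_pow hn])]
  simp [binCoeff_zero]

lemma binSum_sq {y : ℝ} (hy : |y| < 1) : binSum y ^ 2 * (1 - y) = 1 := by
  set W : ℝ → ℝ := fun z => binSum z ^ 2 * (1 - z) with hW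
  have hWd : ∀ z ∈ Set.Ioo (-1:ℝ) 1, HasDerivAt W 0 z := by
    intro z hz
    have hz' : |z| < 1 := abs_lt.mpr ⟨hz.1, hz.2⟩
    have h1 := ((hasDerivAt_binSum hz').fun_pow 2).fun_mul ((hasDerivAt_id z).const_sub 1)
    refine h1.congr_deriv ?_
    have := ode_binSum hz'
    simp only [Nat.cast_ofNat, pow_one, id_eq]
    linear_combination (binSum z) * this
  have hmem : y ∈ Set.Ioo (-1:ℝ) 1 := abs_lt.mp hy
  have h0 : (0:ℝ) ∈ Set.Ioo (-1:ℝ) 1 := by norm_num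
  have hsub : Set.Icc (min y 0) (max y 0) ⊆ Set.Ioo (-1:ℝ) 1 := by
    intro x hx
    obtain ⟨h1, h2⟩ := hx
    have hmin : -1 < min y 0 := lt_min_iff.mpr ⟨hmem.1, by norm_num⟩
    have hmax : max y 0 < 1 := max_lt hmem.2 one_pos
    exact ⟨lt_of_lt_of_le hmin h1, lt_of_le_of_lt h2 hmax⟩
  have hcont : ContinuousOn W (Set.Icc (min y 0) (max y 0)) :=
    fun x hx => ((hWd x (hsub hx)).continuousAt).continuousWithinAt
  have hder : ∀ x ∈ Set.Ico (min y 0) (max y 0), HasDerivWithinAt W 0 (Set.Ici x) x :=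
    fun x hx => (hWd x (hsub ⟨hx.1, hx.2.le⟩)).hasDerivWithinAt
  have hconst := constant_of_has_deriv_right_zero hcont hder
  have hymem : y ∈ Set.Icc (min y 0) (max y 0) := ⟨min_le_left _ _, le_max_left _ _⟩
  have h0mem : (0:ℝ) ∈ Set.Icc (min y 0) (max y 0) := ⟨min_le_right _ _, le_max_right _ _⟩
  have hminmem : min y 0 ∈ Set.Icc (min y 0) (max y 0) := ⟨le_refl _, min_le_of_left_le (le_max_left _ _)⟩
  have := (hconst y hymem).trans (hconst 0 h0mem).symm
  simpa [hW, binSum_zero] using this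

lemma binSum_pos {y : ℝ} (hy : |y| < 1) : 0 < binSum y := by
  by_contra h
  push_neg at h
  have hne : binSum y ≠ 0 := by
    intro h0
    have := binSum_sq hy
    rw [h0] at this; norm_num at this
  have hlt : binSum y < 0 := lt_of_le_of_ne h hne
  have hcont : ContinuousOn binSum (Set.uIcc y 0) := by
    intro x hx
    have hx' : |x| < 1 := by
      rcases Set.mem_uIcc.mp hx with ⟨h1, h2⟩ | ⟨h1, h2⟩ <;>
        cases' abs_lt.mp hy with hy1 hy2 <;> rw [abs_lt] <;> constructor <;> linarith
    exact (hasDerivAt_binSum hx').continuousAt.continuousWithinAt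
  have h0mem : (0:ℝ) ∈ Set.uIcc (binSum y) (binSum 0) := by
    rw [binSum_zero, Set.mem_uIcc]
    left; exact ⟨hlt.le, by norm_num⟩
  obtain ⟨z, hz, hz0⟩ := intermediate_value_uIcc hcont h0mem
  have hz' : |z| < 1 := by
    rcases Set.mem_uIcc.mp hz with ⟨h1, h2⟩ | ⟨h1, h2⟩ <;>
      cases' abs_lt.mp hy with hy1 hy2 <;> rw [abs_lt] <;> constructor <;> linarith
  have := binSum_sq hz'
  rw [hz0] at this; norm_num at this

lemma binSum_eq {y : ℝ} (hy : |y| < 1) : binSum y = (Real.sqrt (1 - y))⁻¹ := by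
  have h1 : (0:ℝ) < 1 - y := by cases' abs_lt.mp hy with a b; linarith
  have h2 := binSum_sq hy
  have h3 : binSum y ^ 2 = (1 - y)⁻¹ := by field_simp at h2 ⊢; linarith
  rw [← Real.sqrt_sq (binSum_pos hy).le, h3, ← Real.sqrt_inv]

lemma dupCoeff (m : ℕ) :
    (∏ i ∈ Finset.range m, ((1:ℝ)/4 + i)) * (∏ i ∈ Finset.range m, ((3:ℝ)/4 + i)) /
      ((∏ i ∈ Finset.range m, ((1:ℝ)/2 + i)) * (m.factorial : ℝ)) = binCoeff (2*m) := by
  induction m with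
  | zero => simp [binCoeff_zero]
  | succ m ih =>
    have hP : (0:ℝ) < ∏ i ∈ Finset.range m, ((1:ℝ)/2 + i) :=
      Finset.prod_pos fun i _ => by positivity
    have hPne : (∏ i ∈ Finset.range m, ((1:ℝ)/2 + i)) ≠ 0 := ne_of_gt hP
    have hfne : (m.factorial : ℝ) ≠ 0 := by exact_mod_cast m.factorial_ne_zero
    have hstep1 := binCoeff_succ (2*m)
    have hstep2 := binCoeff_succ (2*m+1)
    push_cast at hstep1 hstep2
    have h2m : 2*(m+1) = 2*m+1+1 := by ring
    rw [h2m]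
    -- from hstep1, hstep2: binCoeff (2m+2) = binCoeff (2m) * ((2m+1/2)(2m+3/2))/((2m+1)(2m+2))
    have e1 : (2*(2*(m:ℝ)+1)+1) ≠ 0 := by positivity
    have hb1 : binCoeff (2*m+1) = (2*(2*(m:ℝ))+1) * binCoeff (2*m) / (2*(2*(m:ℝ)+1)) := by
      rw [eq_div_iff (by positivity)]
      linarith [hstep1]
    have hb2 : binCoeff (2*m+1+1) = (2*(2*(m:ℝ)+1)+1) * binCoeff (2*m+1) / (2*(2*(m:ℝ)+1+1)) := by
      rw [eq_div_iff (by positivity)]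
      linarith [hstep2]
    rw [hb2, hb1, ← ih]
    rw [Finset.prod_range_succ, Finset.prod_range_succ, Finset.prod_range_succ,
      Nat.factorial_succ]
    push_cast
    field_simp
    ring

lemma hyp_closed {y : ℝ} (h0 : 0 ≤ y) (h1 : y < 1) :
    hyp (1/4) (3/4) (1/2) y
      = ((Real.sqrt (1 - Real.sqrt y))⁻¹ + (Real.sqrt (1 + Real.sqrt y))⁻¹) / 2 := by
  set u := Real.sqrt y with hu
  have hu0 : 0 ≤ u := Real.sqrt_nonneg y
  have hu2 : u ^ 2 = y := Real.sq_sqrt h0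
  have hu1 : u < 1 := by nlinarith
  have huabs : |u| < 1 := by rw [abs_of_nonneg hu0]; exact hu1
  have hnegabs : |(-u)| < 1 := by rwa [abs_neg]
  have hA : HasSum (fun n => binCoeff n * u ^ n) (binSum u) := (summable_binCoeff huabs).hasSum
  have hB : HasSum (fun n => binCoeff n * (-u) ^ n) (binSum (-u)) :=
    (summable_binCoeff hnegabs).hasSum
  have hC := hA.add hB
  -- reindex over even indices
  have hinj : Function.Injective (fun m : ℕ => 2 * m) := fun a b h => by
    simp only at h; omega
  have hvanish : ∀ n ∉ Set.range (fun m : ℕ => 2 * m),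
      binCoeff n * u ^ n + binCoeff n * (-u) ^ n = 0 := by
    intro n hn
    have hodd : Odd n := by simpa using hn
    rw [hodd.neg_pow]
    ring
  have hD : HasSum ((fun n => binCoeff n * u ^ n + binCoeff n * (-u) ^ n) ∘ (fun m : ℕ => 2 * m))
      (binSum u + binSum (-u)) := (hinj.hasSum_iff hvanish).mpr hC
  have hfun : ((fun n => binCoeff n * u ^ n + binCoeff n * (-u) ^ n) ∘ (fun m : ℕ => 2 * m))
      = fun m => 2 * (binCoeff (2*m) * y ^ m) := by
    funext m
    have h2 : (-u) ^ (2*m) = u ^ (2*m) := by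
      rw [neg_pow, Even.neg_one_pow ⟨m, by ring⟩, one_mul]
    have h3 : u ^ (2*m) = y ^ m := by rw [pow_mul, hu2]
    simp only [Function.comp, h2, h3]
    ring
  rw [hfun] at hD
  have hE : HasSum (fun m => binCoeff (2*m) * y ^ m) ((binSum u + binSum (-u)) / 2) :=
    (hD.div_const 2).congr_fun (fun m => by ring)
  have hhyp : hyp (1/4) (3/4) (1/2) y = (binSum u + binSum (-u)) / 2 := by
    rw [hyp]
    have : (fun m : ℕ => ((∏ i ∈ Finset.range m, ((1:ℝ)/4 + i)) *
        (∏ i ∈ Finset.range m, ((3:ℝ)/4 + i)) /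
        ((∏ i ∈ Finset.range m, ((1:ℝ)/2 + i)) * (m.factorial : ℝ))) * y ^ m)
        = fun m => binCoeff (2*m) * y ^ m := by
      funext m
      rw [dupCoeff m]
    rw [this, hE.tsum_eq]
  rw [hhyp, binSum_eq huabs, binSum_eq hnegabs]
  rw [sub_neg_eq_add]

theorem stmt1 (κ : ℝ) (hκ : κ ∈ Set.Ioo (0:ℝ) 1) (lam : ℝ) (hlam : lam = Real.sqrt (1 - κ^2))
    (ε : ℝ) (hε : 0 < ε) (φ ψ : ℝ → ℝ)
    (hφ0 : φ 0 = 0) (hψ0 : ψ 0 = 0)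
    (hφdiff : ∀ u ∈ Set.Ioo (-ε) ε, DifferentiableAt ℝ φ u)
    (hψdiff : ∀ u ∈ Set.Ioo (-ε) ε, DifferentiableAt ℝ ψ u)
    (hsin : ∀ u ∈ Set.Ioo (-ε) ε, Real.sin (ψ u) = κ * Real.sin (φ u))
    (hinv : ∀ u ∈ Set.Ioo (-ε) ε,
      (∫ t in (0:ℝ)..(φ u), hyp (1/4) (3/4) (1/2) (κ^2 * Real.sin t ^ 2)) = u)
    (d : ℝ → ℝ) (hd : d = fun u => Real.cos (ψ u)) :
    d 0 = 1 ∧ ∀ u ∈ Set.Ioo (-ε) ε,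
      (deriv d u)^2 = 2 * (1 - d u) * ((d u)^2 - lam^2) := by
  obtain ⟨hκ0, hκ1⟩ := hκ
  -- positivity of 1 ± κ sin t
  have hpos₁ : ∀ t : ℝ, 0 < 1 - κ * Real.sin t := by
    intro t; nlinarith [Real.sin_le_one t, Real.neg_one_le_sin t]
  have hpos₂ : ∀ t : ℝ, 0 < 1 + κ * Real.sin t := by
    intro t; nlinarith [Real.sin_le_one t, Real.neg_one_le_sin t]
  set G : ℝ → ℝ :=
    fun t => ((Real.sqrt (1 - κ * Real.sin t))⁻¹ + (Real.sqrt (1 + κ * Real.sin t))⁻¹) / 2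
    with hG
  -- integrand equals G
  have hGval : ∀ t, hyp (1/4) (3/4) (1/2) (κ^2 * Real.sin t ^ 2) = G t := by
    intro t
    have hy0 : 0 ≤ κ^2 * Real.sin t ^ 2 := by positivity
    have hy1 : κ^2 * Real.sin t ^ 2 < 1 := by
      nlinarith [Real.sin_sq_le_one t, sq_nonneg (Real.sin t)]
    have hsq : Real.sqrt (κ^2 * Real.sin t ^ 2) = κ * |Real.sin t| := by
      rw [show κ^2 * Real.sin t ^ 2 = (κ * |Real.sin t|)^2 by rw [mul_pow, sq_abs],
        Real.sqrt_sq (by positivity)]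
    rw [hyp_closed hy0 hy1, hsq]
    rcases le_or_gt 0 (Real.sin t) with h | h
    · rw [abs_of_nonneg h]
    · rw [abs_of_neg h, hG]
      have e1 : 1 - κ * -Real.sin t = 1 + κ * Real.sin t := by ring
      have e2 : 1 + κ * -Real.sin t = 1 - κ * Real.sin t := by ring
      rw [e1, e2]
      ring
  have hGcont : Continuous G := by
    apply Continuous.div_const
    apply Continuous.add
    · exact (Real.continuous_sqrt.comp (by fun_prop)).inv₀
        fun t => ne_of_gt (Real.sqrt_pos.mpr (hpos₁ t))
    · exact (Real.continuous_sqrt.comp (by fun_prop)).inv₀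
        fun t => ne_of_gt (Real.sqrt_pos.mpr (hpos₂ t))
  set S : Set ℝ := Set.Ioo (-ε) ε with hS
  have hSopen : IsOpen S := isOpen_Ioo
  -- derivative relation from the inverse property
  have key1 : ∀ u ∈ S, G (φ u) * deriv φ u = 1 := by
    intro u hu
    have hφd := (hφdiff u hu).hasDerivAt
    have hFd : HasDerivAt (fun T => ∫ t in (0:ℝ)..T, G t) (G (φ u)) (φ u) :=
      (hGcont.integral_hasStrictDerivAt 0 (φ u)).hasDerivAt
    have hc : HasDerivAt (fun v => ∫ t in (0:ℝ)..(φ v), G t) (G (φ u) * deriv φ u) u :=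
      hFd.comp u hφd
    have heq : (fun v => ∫ t in (0:ℝ)..(φ v), G t) =ᶠ[nhds u] id := by
      filter_upwards [hSopen.mem_nhds hu] with v hv
      have := hinv v hv
      simp only [funext hGval] at this
      simpa using this
    have hid : HasDerivAt (id : ℝ → ℝ) (G (φ u) * deriv φ u) u :=
      hc.congr_of_eventuallyEq heq.symm
    exact (hid.unique (hasDerivAt_id u))
  -- derivative relation from sin ψ = κ sin φ
  have key2 : ∀ u ∈ S, Real.cos (ψ u) * deriv ψ u = κ * (Real.cos (φ u) * deriv φ u) := by
    intro u hu
    have hφd := (hφdiff u hu).hasDerivAt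
    have hψd := (hψdiff u hu).hasDerivAt
    have hL : HasDerivAt (fun v => Real.sin (ψ v)) (Real.cos (ψ u) * deriv ψ u) u :=
      (Real.hasDerivAt_sin (ψ u)).comp u hψd
    have hR : HasDerivAt (fun v => κ * Real.sin (φ v)) (κ * (Real.cos (φ u) * deriv φ u)) u :=
      ((Real.hasDerivAt_sin (φ u)).comp u hφd).const_mul κ
    have heq : (fun v => Real.sin (ψ v)) =ᶠ[nhds u] (fun v => κ * Real.sin (φ v)) := by
      filter_upwards [hSopen.mem_nhds hu] with v hv
      exact hsin v hv
    exact ((hR.congr_of_eventuallyEq heq).unique hL).symm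
  -- ψ stays in (-π/2, π/2)
  have h0S : (0:ℝ) ∈ S := by constructor <;> simp [hε] <;> linarith
  have key3 : ∀ u ∈ S, ψ u ∈ Set.Ioo (-(π/2)) (π/2) := by
    intro u hu
    have hsub : Set.uIcc (0:ℝ) u ⊆ S := Set.ordConnected_Ioo.uIcc_subset h0S hu
    have hcont : ContinuousOn ψ (Set.uIcc (0:ℝ) u) :=
      fun v hv => ((hψdiff v (hsub hv)).continuousAt).continuousWithinAt
    by_contra hcon
    rw [Set.mem_Ioo] at hcon
    push_neg at hcon
    have habs : π/2 ≤ ψ u ∨ ψ u ≤ -(π/2) := by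
      rcases le_or_gt (ψ u) (-(π/2)) with h | h
      · right; exact h
      · left; exact hcon h
    have hsinlt : ∀ v ∈ S, |Real.sin (ψ v)| < 1 := by
      intro v hv
      rw [hsin v hv, abs_mul, abs_of_pos hκ0]
      nlinarith [abs_sin_le_one (φ v), abs_nonneg (Real.sin (φ v))]
    rcases habs with h | h
    · have hmem : π/2 ∈ Set.uIcc (ψ 0) (ψ u) := by
        rw [hψ0, Set.mem_uIcc]
        left; exact ⟨le_of_lt (by positivity), h⟩
      obtain ⟨v, hv, hveq⟩ := intermediate_value_uIcc hcont hmem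
      have := hsinlt v (hsub hv)
      rw [hveq, Real.sin_pi_div_two] at this
      norm_num at this
    · have hmem : -(π/2) ∈ Set.uIcc (ψ 0) (ψ u) := by
        rw [hψ0, Set.mem_uIcc]
        right; exact ⟨h, neg_nonpos_of_nonneg (le_of_lt (by positivity))⟩
      obtain ⟨v, hv, hveq⟩ := intermediate_value_uIcc hcont hmem
      have := hsinlt v (hsub hv)
      rw [hveq] at this
      rw [Real.sin_neg, Real.sin_pi_div_two] at this
      norm_num at this
  constructor
  · rw [hd]; simp [hψ0]
  intro u hu
  -- names
  set s' := Real.sin (ψ u) with hs'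
  set c := Real.cos (ψ u) with hc
  have hcpos : 0 < c := Real.cos_pos_of_mem_Ioo (key3 u hu)
  have hpyth : s' ^ 2 + c ^ 2 = 1 := Real.sin_sq_add_cos_sq (ψ u)
  have hs'1 : s' ^ 2 < 1 := by nlinarith
  have h1s : 0 < 1 - s' := by nlinarith
  have h1s' : 0 < 1 + s' := by nlinarith
  set p := Real.sqrt (1 - s') with hp
  set q := Real.sqrt (1 + s') with hq
  have hp0 : 0 < p := Real.sqrt_pos.mpr h1s
  have hq0 : 0 < q := Real.sqrt_pos.mpr h1s'
  have hp2 : p ^ 2 = 1 - s' := Real.sq_sqrt h1s.le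
  have hq2 : q ^ 2 = 1 + s' := Real.sq_sqrt h1s'.le
  have hpq : p * q = c := by
    rw [hp, hq, ← Real.sqrt_mul h1s.le]
    rw [show (1 - s') * (1 + s') = c ^ 2 by nlinarith]
    exact Real.sqrt_sq hcpos.le
  have hsφ : κ * Real.sin (φ u) = s' := (hsin u hu).symm
  -- equation e1
  have hGφ : G (φ u) = (p⁻¹ + q⁻¹) / 2 := by
    rw [hG]
    simp only [hsφ]
    rw [hp, hq]
  have e1 : (p⁻¹ + q⁻¹) / 2 * deriv φ u = 1 := by rw [← hGφ]; exact key1 u hu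
  have e1' : (p + q) * deriv φ u = 2 * c := by
    have hinv' : p⁻¹ + q⁻¹ = (p + q) / c := by
      rw [← hpq]; field_simp; ring
    rw [hinv'] at e1
    field_simp at e1
    linarith
  have e2 : c * deriv ψ u = κ * (Real.cos (φ u) * deriv φ u) := key2 u hu
  -- derivative of d
  have hdd : deriv d u = -s' * deriv ψ u := by
    have : HasDerivAt d (-Real.sin (ψ u) * deriv ψ u) u := by
      rw [hd]
      exact (Real.hasDerivAt_cos (ψ u)).comp u (hψdiff u hu).hasDerivAt
    rw [this.deriv, hs']
  have hlam2 : lam ^ 2 = 1 - κ ^ 2 := by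
    rw [hlam]; exact Real.sq_sqrt (by nlinarith)
  have hκcos : κ ^ 2 * Real.cos (φ u) ^ 2 = c ^ 2 - lam ^ 2 := by
    have hp2' := Real.sin_sq_add_cos_sq (φ u)
    linear_combination κ^2 * hp2' - (κ * Real.sin (φ u) + s') * hsφ - hpyth + hlam2
  -- algebra
  have hA2 : s' ^ 2 * (deriv φ u) ^ 2 = 2 * (1 - c) * c ^ 2 := by
    have h6 : (2 + 2 * c) * (deriv φ u) ^ 2 = 4 * c ^ 2 := by
      linear_combination ((p + q) * deriv φ u + 2 * c) * e1' - (deriv φ u)^2 * hp2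
        - (deriv φ u)^2 * hq2 - 2 * (deriv φ u)^2 * hpq
    have h7 : s' ^ 2 = 1 - c ^ 2 := by linarith
    have h8 : (2 + 2 * c) * (s' ^ 2 * (deriv φ u) ^ 2)
        = (2 + 2 * c) * (2 * (1 - c) * c ^ 2) := by
      linear_combination s' ^ 2 * h6 + 4 * c ^ 2 * h7
    exact mul_left_cancel₀ (by positivity) h8
  have hB2 : c ^ 2 * (deriv ψ u) ^ 2 = (c ^ 2 - lam ^ 2) * (deriv φ u) ^ 2 := by
    linear_combination (c * deriv ψ u + κ * Real.cos (φ u) * deriv φ u) * e2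
      + (deriv φ u)^2 * hκcos
  have hgoal : c ^ 2 * ((deriv d u) ^ 2) = c ^ 2 * (2 * (1 - d u) * ((d u) ^ 2 - lam ^ 2)) := by
    have hdu : d u = c := by rw [hd]
    rw [hdd, hdu]
    linear_combination s' ^ 2 * hB2 + (c ^ 2 - lam ^ 2) * hA2
  exact mul_left_cancel₀ (by positivity) hgoal
end

section
/- Let α, β ∈ (0, π/2) be complementary (α + β = π/2), and let I(γ) = ∫₀^γ cos(t/2)/√(cos²t - cos²γ) dt for an acute angle γ. Then ∫_{-cos β}^{cos β} dy/√(2(1-y)(cos²β - y²)) = √2 · I(α). -/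
set_option maxHeartbeats 1000000

open Real Set MeasureTheory intervalIntegral

private lemma sq_pos_of_mem (α t : ℝ) (hα : α ∈ Set.Ioo 0 (π/2)) (ht : t ∈ Set.Ioo (-α) α) :
    0 < Real.cos t ^ 2 - Real.cos α ^ 2 := by
  have hπ : 0 < π := pi_pos
  have hαpi : α ∈ Set.Icc 0 π := ⟨hα.1.le, by linarith [hα.2]⟩
  have htlt : |t| < α := abs_lt.mpr ⟨ht.1, ht.2⟩
  have habs : |t| ∈ Set.Icc 0 π := ⟨abs_nonneg t, by linarith [hα.2]⟩
  have h1 : Real.cos α < Real.cos |t| := Real.strictAntiOn_cos habs hαpi htlt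
  rw [Real.cos_abs] at h1
  have h0 : 0 ≤ Real.cos α := Real.cos_nonneg_of_mem_Icc ⟨by linarith [hα.1], hα.2.le⟩
  nlinarith

private lemma image_sin_Ioo (α : ℝ) (hα : α ∈ Set.Ioo 0 (π/2)) :
    Real.sin '' Set.Ioo (-α) α = Set.Ioo (-Real.sin α) (Real.sin α) := by
  have hπ : 0 < π := pi_pos
  have hsub : Set.Icc (-α) α ⊆ Set.Icc (-(π/2)) (π/2) := by
    apply Set.Icc_subset_Icc <;> [linarith [hα.2]; linarith [hα.2]]
  ext y
  constructor
  · rintro ⟨t, ht, rfl⟩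
    have h1 : Real.sin (-α) < Real.sin t :=
      Real.strictMonoOn_sin (hsub ⟨le_refl _, by linarith [hα.1]⟩)
        (hsub ⟨ht.1.le, ht.2.le⟩) ht.1
    have h2 : Real.sin t < Real.sin α :=
      Real.strictMonoOn_sin (hsub ⟨ht.1.le, ht.2.le⟩)
        (hsub ⟨by linarith [hα.1], le_refl _⟩) ht.2
    rw [Real.sin_neg] at h1
    exact ⟨h1, h2⟩
  · rintro ⟨h1, h2⟩
    have hs1 : Real.sin α ≤ 1 := Real.sin_le_one α
    have hy1 : -1 ≤ y := by linarith
    have hy2 : y ≤ 1 := by linarith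
    refine ⟨Real.arcsin y, ⟨?_, ?_⟩, Real.sin_arcsin hy1 hy2⟩
    · have := Real.strictMonoOn_arcsin ⟨by linarith, by linarith⟩ ⟨hy1, hy2⟩ h1
      rwa [Real.arcsin_neg, Real.arcsin_sin (by linarith [hα.1]) (by linarith [hα.2]),
        ] at this
    · have := Real.strictMonoOn_arcsin ⟨hy1, hy2⟩ ⟨by linarith, by linarith⟩ h2
      rwa [Real.arcsin_sin (by linarith [hα.1]) (by linarith [hα.2])] at this

/-- Key integrability lemma. -/
private lemma key_integrable (α : ℝ) (hα : α ∈ Set.Ioo 0 (π/2)) (c : ℝ → ℝ)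
    (hc : Measurable c) (hb : ∀ t, |c t| ≤ 2) :
    IntervalIntegrable
      (fun t => c t / (Real.sqrt 2 * Real.sqrt (Real.cos t ^ 2 - Real.cos α ^ 2)))
      volume 0 α := by
  set K : ℝ := 2 * Real.sin (α/2) * Real.cos α / π with hK
  have hπ : 0 < π := pi_pos
  have hsin : 0 < Real.sin (α/2) := Real.sin_pos_of_pos_of_lt_pi (by linarith [hα.1])
    (by linarith [hα.2])
  have hcos : 0 < Real.cos α := Real.cos_pos_of_mem_Ioo ⟨by linarith [hα.1], hα.2⟩
  have hKpos : 0 < K := by positivity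
  set M : ℝ := 2 / (Real.sqrt 2 * Real.sqrt K) with hM
  have hbound : IntervalIntegrable (fun t => M * (α - t) ^ (-(1/2) : ℝ)) volume 0 α := by
    have h1 : IntervalIntegrable (fun x : ℝ => x ^ (-(1/2) : ℝ)) volume 0 α :=
      intervalIntegrable_rpow' (by norm_num)
    have h2 := h1.comp_sub_left α
    simp only [sub_zero, sub_self] at h2
    exact h2.symm.const_mul M
  rw [intervalIntegrable_iff_integrableOn_Ioo_of_le hα.1.le] at hbound ⊢
  refine Integrable.mono hbound ?_ ?_
  · apply Measurable.aestronglyMeasurable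
    exact hc.div (measurable_const.mul
      (((Real.measurable_cos.pow_const 2).sub measurable_const).sqrt))
  · rw [ae_restrict_iff' measurableSet_Ioo]
    filter_upwards with t ht
    have hX : 0 < Real.cos t ^ 2 - Real.cos α ^ 2 :=
      sq_pos_of_mem α t hα ⟨by linarith [ht.1, hα.1], ht.2⟩
    have hαt : 0 < α - t := by linarith [ht.2]
    have hlow : K * (α - t) ≤ Real.cos t ^ 2 - Real.cos α ^ 2 := by
      have hct : Real.cos α < Real.cos t := by
        have h1 : 0 ≤ Real.cos t := Real.cos_nonneg_of_mem_Icc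
          ⟨by linarith [ht.1, hα.2], by linarith [ht.2, hα.2]⟩
        nlinarith
      have hdiff : Real.cos t - Real.cos α
          = 2 * Real.sin ((t + α)/2) * Real.sin ((α - t)/2) := by
        rw [Real.cos_sub_cos, show (t - α)/2 = -((α - t)/2) by ring, Real.sin_neg]
        ring
      have hs1 : Real.sin (α/2) ≤ Real.sin ((t + α)/2) := by
        rcases eq_or_lt_of_le (by linarith [ht.1] : α/2 ≤ (t + α)/2) with h | h
        · rw [h]
        · exact (Real.strictMonoOn_sin ⟨by linarith [hα.1], by linarith [hα.2]⟩
            ⟨by linarith [hα.1, ht.1], by linarith [hα.2, ht.2]⟩ h).le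
      have hs2 : (α - t)/π ≤ Real.sin ((α - t)/2) := by
        have := Real.mul_le_sin (x := (α - t)/2) (by linarith [ht.2])
          (by linarith [hα.2, ht.1])
        calc (α - t)/π = 2/π * ((α-t)/2) := by field_simp
          _ ≤ _ := this
      have hfrac : 0 ≤ (α - t)/π := div_nonneg hαt.le hπ.le
      have hs2' : 0 ≤ Real.sin ((α - t)/2) := le_trans hfrac hs2
      have hsa : 0 < Real.sin ((t + α)/2) := lt_of_lt_of_le hsin hs1
      have hcosle : Real.cos α ≤ Real.cos t + Real.cos α := by linarith [hct]
      have expand : Real.cos t ^ 2 - Real.cos α ^ 2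
          = (Real.cos t - Real.cos α) * (Real.cos t + Real.cos α) := by ring
      rw [expand, hdiff]
      calc K * (α - t) = (2 * Real.sin (α/2) * ((α - t)/π)) * Real.cos α := by
            rw [hK]; field_simp
        _ ≤ (2 * Real.sin ((t+α)/2) * Real.sin ((α-t)/2)) * (Real.cos t + Real.cos α) := by
            apply mul_le_mul _ hcosle hcos.le
              (mul_nonneg (mul_nonneg (by norm_num) hsa.le) hs2')
            nlinarith
        _ = _ := rfl
    have hrpow : (α - t) ^ (-(1/2) : ℝ) = (Real.sqrt (α - t))⁻¹ := by
      rw [Real.rpow_neg hαt.le, Real.sqrt_eq_rpow]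
    have hsK : 0 < Real.sqrt (K * (α - t)) := Real.sqrt_pos.mpr (mul_pos hKpos hαt)
    have hsle : Real.sqrt (K * (α - t)) ≤ Real.sqrt (Real.cos t ^ 2 - Real.cos α ^ 2) :=
      Real.sqrt_le_sqrt hlow
    have hnorm : ‖c t / (Real.sqrt 2 * Real.sqrt (Real.cos t ^ 2 - Real.cos α ^ 2))‖
        ≤ 2 / (Real.sqrt 2 * Real.sqrt (K * (α - t))) := by
      rw [norm_div, Real.norm_eq_abs, Real.norm_eq_abs]
      have hd : 0 < Real.sqrt 2 * Real.sqrt (K * (α - t)) := by positivity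
      have habs : |Real.sqrt 2 * Real.sqrt (Real.cos t ^ 2 - Real.cos α ^ 2)|
          = Real.sqrt 2 * Real.sqrt (Real.cos t ^ 2 - Real.cos α ^ 2) := by
        apply abs_of_nonneg; positivity
      rw [habs]
      apply div_le_div₀ (by norm_num) (hb t) hd
      exact mul_le_mul_of_nonneg_left hsle (Real.sqrt_nonneg 2)
    refine hnorm.trans (le_of_eq ?_)
    have hn1 : Real.sqrt K ≠ 0 := ne_of_gt (Real.sqrt_pos.mpr hKpos)
    have hn2 : Real.sqrt (α - t) ≠ 0 := ne_of_gt (Real.sqrt_pos.mpr hαt)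
    have hn3 : Real.sqrt 2 ≠ 0 := by positivity
    have hr : 0 < (α - t) ^ (-(1/2) : ℝ) := Real.rpow_pos_of_pos hαt _
    have hMpos : 0 ≤ M := by positivity
    rw [Real.norm_eq_abs, abs_of_nonneg (mul_nonneg hMpos hr.le), hM, hrpow,
      Real.sqrt_mul hKpos.le]
    field_simp
    try ring

theorem stmt8 (α β : ℝ) (hα : α ∈ Set.Ioo 0 (π/2)) (hβ : β ∈ Set.Ioo 0 (π/2))
    (hcompl : α + β = π/2) :
    (∫ y in (-(Real.cos β))..(Real.cos β),
        1 / Real.sqrt (2 * (1 - y) * (Real.cos β ^ 2 - y^2))) =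
    Real.sqrt 2 *
      ∫ t in (0:ℝ)..α, Real.cos (t/2) / Real.sqrt (Real.cos t ^ 2 - Real.cos α ^ 2) := by
  have hπ : 0 < π := pi_pos
  have hβα : β = π/2 - α := by linarith
  rw [hβα, Real.cos_pi_div_two_sub]
  have hsinα : 0 < Real.sin α := Real.sin_pos_of_pos_of_lt_pi hα.1 (by linarith [hα.2])
  set g : ℝ → ℝ := fun y => 1 / Real.sqrt (2 * (1 - y) * (Real.sin α ^ 2 - y ^ 2)) with hg
  set h : ℝ → ℝ := fun t =>
    (Real.cos (t/2) + Real.sin (t/2)) /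
      (Real.sqrt 2 * Real.sqrt (Real.cos t ^ 2 - Real.cos α ^ 2)) with hh
  -- Step 1: change of variables y = sin t
  have step1 : (∫ y in (-(Real.sin α))..(Real.sin α), g y)
      = ∫ t in Set.Ioo (-α) α, |Real.cos t| • g (Real.sin t) := by
    rw [intervalIntegral.integral_of_le (by linarith), integral_Ioc_eq_integral_Ioo,
      ← image_sin_Ioo α hα]
    exact integral_image_eq_integral_abs_deriv_smul measurableSet_Ioo
      (fun x _ => (Real.hasDerivAt_sin x).hasDerivWithinAt)
      (Real.injOn_sin.mono (Set.Ioo_subset_Icc_self.trans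
        (Set.Icc_subset_Icc (by linarith [hα.2]) (by linarith [hα.2])))) g
  -- Step 2: pointwise simplification on Ioo (-α) α
  have step2 : (∫ t in Set.Ioo (-α) α, |Real.cos t| • g (Real.sin t))
      = ∫ t in Set.Ioo (-α) α, h t := by
    apply setIntegral_congr_fun measurableSet_Ioo
    intro t ht
    have hX : 0 < Real.cos t ^ 2 - Real.cos α ^ 2 := sq_pos_of_mem α t hα ht
    have hXeq : Real.sin α ^ 2 - Real.sin t ^ 2 = Real.cos t ^ 2 - Real.cos α ^ 2 := by
      have h1 := Real.sin_sq_add_cos_sq α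
      have h2 := Real.sin_sq_add_cos_sq t
      linarith
    have hcost : 0 < Real.cos t := Real.cos_pos_of_mem_Ioo
      ⟨by linarith [ht.1, hα.2], by linarith [ht.2, hα.2]⟩
    set c := Real.cos (t/2) with hc
    set s := Real.sin (t/2) with hs
    have hpyt : s ^ 2 + c ^ 2 = 1 := Real.sin_sq_add_cos_sq (t/2)
    have hcos2 : Real.cos t = c ^ 2 - s ^ 2 := by
      have h2 := Real.cos_two_mul (t/2)
      rw [show 2 * (t/2) = t by ring] at h2
      rw [h2]; try linarith
    have hsin2 : Real.sin t = 2 * s * c := by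
      have h2 := Real.sin_two_mul (t/2)
      rw [show 2 * (t/2) = t by ring] at h2
      rw [h2]; try ring
    have hcs : 0 < c - s := by
      have hq : 0 < Real.cos (t/2 + π/4) := Real.cos_pos_of_mem_Ioo
        ⟨by linarith [ht.1, hα.2], by linarith [ht.2, hα.2]⟩
      rw [Real.cos_add, Real.cos_pi_div_four, Real.sin_pi_div_four] at hq
      nlinarith [Real.sq_sqrt (by norm_num : (0:ℝ) ≤ 2), Real.sqrt_nonneg 2]
    have h1ms : 1 - Real.sin t = (c - s) ^ 2 := by rw [hsin2]; nlinarith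
    have hfact : 2 * (1 - Real.sin t) * (Real.sin α ^ 2 - Real.sin t ^ 2)
        = (Real.sqrt 2 * (c - s)) ^ 2 * (Real.cos t ^ 2 - Real.cos α ^ 2) := by
      rw [h1ms, hXeq, mul_pow, Real.sq_sqrt (by norm_num : (0:ℝ) ≤ 2)]
      try ring
    have hsqrt : Real.sqrt (2 * (1 - Real.sin t) * (Real.sin α ^ 2 - Real.sin t ^ 2))
        = Real.sqrt 2 * (c - s) * Real.sqrt (Real.cos t ^ 2 - Real.cos α ^ 2) := by
      rw [hfact, Real.sqrt_mul (sq_nonneg _), Real.sqrt_sq (by positivity)]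
    simp only [hg, hh, smul_eq_mul, hsqrt]
    rw [abs_of_pos hcost, ← hc, ← hs]
    set d := Real.sqrt (Real.cos t ^ 2 - Real.cos α ^ 2) with hd
    have hsX : 0 < d := Real.sqrt_pos.mpr hX
    have hs2 : 0 < Real.sqrt 2 := by positivity
    rw [hcos2]
    field_simp
    ring
  -- integrability
  have hint2 : IntervalIntegrable h volume 0 α := by
    apply key_integrable α hα _ (by fun_prop)
    intro t
    calc |Real.cos (t/2) + Real.sin (t/2)| ≤ |Real.cos (t/2)| + |Real.sin (t/2)| := abs_add_le _ _
      _ ≤ 2 := by linarith [Real.abs_cos_le_one (t/2), Real.abs_sin_le_one (t/2)]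
  have hnegeq : ∀ x : ℝ, h (-x) = (Real.cos (x/2) - Real.sin (x/2)) /
      (Real.sqrt 2 * Real.sqrt (Real.cos x ^ 2 - Real.cos α ^ 2)) := by
    intro x
    simp only [hh, neg_div, Real.cos_neg, Real.sin_neg]
    ring
  have hint1' : IntervalIntegrable (fun x => h (-x)) volume 0 α := by
    simp only [hnegeq]
    apply key_integrable α hα _ (by fun_prop)
    intro t
    calc |Real.cos (t/2) - Real.sin (t/2)| ≤ |Real.cos (t/2)| + |Real.sin (t/2)| :=
          abs_sub _ _
      _ ≤ 2 := by linarith [Real.abs_cos_le_one (t/2), Real.abs_sin_le_one (t/2)]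
  have hint1 : IntervalIntegrable h volume (-α) 0 := by
    rw [IntervalIntegrable.iff_comp_neg]
    simp only [neg_neg, neg_zero]
    exact hint1'.symm
  -- Step 3: symmetrization
  have step3 : (∫ t in Set.Ioo (-α) α, h t)
      = (∫ x in (0:ℝ)..α, h (-x)) + ∫ x in (0:ℝ)..α, h x := by
    rw [← integral_Ioc_eq_integral_Ioo,
      ← intervalIntegral.integral_of_le (by linarith [hα.1] : -α ≤ α),
      ← intervalIntegral.integral_add_adjacent_intervals hint1 hint2]
    congr 1
    rw [intervalIntegral.integral_comp_neg h]
    simp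
  have step4 : (∫ x in (0:ℝ)..α, h (-x)) + (∫ x in (0:ℝ)..α, h x)
      = ∫ x in (0:ℝ)..α, (h (-x) + h x) := (intervalIntegral.integral_add hint1' hint2).symm
  have step5 : (∫ x in (0:ℝ)..α, (h (-x) + h x))
      = ∫ x in (0:ℝ)..α, Real.sqrt 2 *
        (Real.cos (x/2) / Real.sqrt (Real.cos x ^ 2 - Real.cos α ^ 2)) := by
    apply intervalIntegral.integral_congr
    intro x _
    show h (-x) + h x = _
    rw [hnegeq x]
    simp only [hh]
    set d := Real.sqrt (Real.cos x ^ 2 - Real.cos α ^ 2) with hd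
    have h2 : Real.sqrt 2 * Real.sqrt 2 = 2 := Real.mul_self_sqrt (by norm_num)
    rcases eq_or_ne d 0 with hd0 | hd0
    · rw [hd0]; simp
    · have hs2 : Real.sqrt 2 ≠ 0 := by positivity
      rw [← add_div]
      rw [show Real.cos (x/2) - Real.sin (x/2) + (Real.cos (x/2) + Real.sin (x/2))
        = 2 * Real.cos (x/2) by ring]
      field_simp
      first
      | linear_combination (-(Real.cos (x/2) * d)) * h2
      | linear_combination (Real.cos (x/2) * d) * h2
      | linear_combination (-(2 * Real.cos (x/2) * d)) * h2
      | linear_combination (2 * Real.cos (x/2) * d) * h2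
      | linear_combination (-(Real.cos (x/2))) * h2
      | ring_nf
      | nlinarith [h2]
  rw [step1, step2, step3, step4, step5, intervalIntegral.integral_const_mul]
end

section
/- For κ ∈ (0,1): ∫₀^{π/2} F(1/4, 3/4; 1/2; κ² sin²t) dt = (π/2) F(1/4, 3/4; 1; κ²). -/
open Real

open MeasureTheory Finset in
private lemma sin_pow_int (m : ℕ) :
    (∫ x in (0:ℝ)..(π/2), Real.sin x ^ (2*m)) =
      (π/2) * ∏ i ∈ Finset.range m, (2*(i:ℝ)+1)/(2*i+2) := by
  have hsym : (∫ x in (0:ℝ)..(π/2), Real.sin x ^ (2*m)) =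
      ∫ x in (π/2)..π, Real.sin x ^ (2*m) := by
    have h := intervalIntegral.integral_comp_sub_left (a := (0:ℝ)) (b := π/2)
      (fun x => Real.sin x ^ (2*m)) π
    simp only [Real.sin_pi_sub] at h
    rw [show π - π/2 = π/2 by ring, sub_zero] at h
    exact h
  have hadd := intervalIntegral.integral_add_adjacent_intervals
    (a := (0:ℝ)) (b := π/2) (c := π) (f := fun x => Real.sin x ^ (2*m)) (μ := MeasureTheory.volume)
    ((Real.continuous_sin.pow _).intervalIntegrable _ _)
    ((Real.continuous_sin.pow _).intervalIntegrable _ _)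
  rw [integral_sin_pow_even] at hadd
  rw [← hsym] at hadd
  linarith

open Finset in
private lemma fac_eq_prod (n : ℕ) :
    (n.factorial : ℝ) = ∏ i ∈ range n, (1 + (i:ℝ)) := by
  rw [← Finset.prod_range_add_one_eq_factorial]
  push_cast
  exact Finset.prod_congr rfl fun i _ => by ring

open Finset in
private lemma coeff_eq_prod (n : ℕ) :
    (∏ i ∈ range n, (1/4 + (i:ℝ))) * (∏ i ∈ range n, (3/4 + (i:ℝ))) /
      ((∏ i ∈ range n, (1/2 + (i:ℝ))) * (n.factorial : ℝ))
    = ∏ i ∈ range n, ((1/4 + (i:ℝ)) * (3/4 + i) / ((1/2 + i) * (1 + i))) := by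
  rw [fac_eq_prod, ← Finset.prod_mul_distrib, ← Finset.prod_mul_distrib,
    ← Finset.prod_div_distrib]

open Finset in
private lemma coeff_le_one (n : ℕ) :
    (∏ i ∈ range n, (1/4 + (i:ℝ))) * (∏ i ∈ range n, (3/4 + (i:ℝ))) /
      ((∏ i ∈ range n, (1/2 + (i:ℝ))) * (n.factorial : ℝ)) ≤ 1 := by
  rw [coeff_eq_prod]
  apply Finset.prod_le_one
  · intro i _
    positivity
  · intro i _
    rw [div_le_one (by positivity)]
    have : (0:ℝ) ≤ i := Nat.cast_nonneg i
    nlinarith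

open Finset in
private lemma coeff_identity (n : ℕ) :
    ((∏ i ∈ range n, (1/4 + (i:ℝ))) * (∏ i ∈ range n, (3/4 + (i:ℝ))) /
      ((∏ i ∈ range n, (1/2 + (i:ℝ))) * (n.factorial : ℝ))) *
      ∏ i ∈ range n, (2*(i:ℝ)+1)/(2*i+2)
    = (∏ i ∈ range n, (1/4 + (i:ℝ))) * (∏ i ∈ range n, (3/4 + (i:ℝ))) /
      ((∏ i ∈ range n, (1 + (i:ℝ))) * (n.factorial : ℝ)) := by
  have h2 : (∏ i ∈ range n, (2*(i:ℝ)+1)/(2*i+2))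
      = (∏ i ∈ range n, (1/2 + (i:ℝ))) / (∏ i ∈ range n, (1 + (i:ℝ))) := by
    rw [← Finset.prod_div_distrib]
    refine Finset.prod_congr rfl fun i _ => ?_
    have h1 : (1:ℝ) + i ≠ 0 := by positivity
    have h2 : (2:ℝ)*i + 2 ≠ 0 := by positivity
    field_simp
    ring
  have hr : (∏ i ∈ range n, (1/2 + (i:ℝ))) ≠ 0 := by positivity
  have h1 : (∏ i ∈ range n, (1 + (i:ℝ))) ≠ 0 := by positivity
  have hf : (n.factorial : ℝ) ≠ 0 := by positivity
  rw [h2]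
  field_simp

open MeasureTheory Finset in
theorem stmt14 (κ : ℝ) (hκ : κ ∈ Set.Ioo (0:ℝ) 1) :
    (∫ t in (0:ℝ)..(π/2), hyp (1/4) (3/4) (1/2) (κ^2 * Real.sin t ^ 2)) =
    (π/2) * hyp (1/4) (3/4) 1 (κ^2) := by
  obtain ⟨hκ0, hκ1⟩ := hκ
  have hK0 : (0:ℝ) ≤ κ^2 := by positivity
  have hK1 : κ^2 < 1 := by nlinarith
  have hp2 : (0:ℝ) ≤ π/2 := by positivity
  set C : ℕ → ℝ := fun n =>
    (∏ i ∈ range n, (1/4 + (i:ℝ))) * (∏ i ∈ range n, (3/4 + (i:ℝ))) /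
      ((∏ i ∈ range n, (1/2 + (i:ℝ))) * (n.factorial : ℝ)) with hC
  have hCpos : ∀ n, 0 < C n := fun n => by rw [hC]; positivity
  have hCle : ∀ n, C n ≤ 1 := fun n => coeff_le_one n
  -- integrability of each term
  have hInt : ∀ n : ℕ, IntegrableOn
      (fun t => C n * (κ^2 * Real.sin t ^ 2)^n) (Set.Ioc 0 (π/2)) volume := by
    intro n
    exact (Continuous.integrableOn_Ioc (by fun_prop))
  -- pointwise bound
  have hptw : ∀ n : ℕ, ∀ t ∈ Set.Ioc (0:ℝ) (π/2),
      ‖C n * (κ^2 * Real.sin t ^ 2)^n‖ ≤ (κ^2)^n := by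
    intro n t _
    have h1 : 0 ≤ κ^2 * Real.sin t ^ 2 := by positivity
    have h2 : κ^2 * Real.sin t ^ 2 ≤ κ^2 := by
      nlinarith [Real.sin_sq_le_one t]
    rw [Real.norm_of_nonneg (by positivity)]
    calc C n * (κ^2 * Real.sin t ^ 2)^n
        ≤ 1 * (κ^2)^n :=
          mul_le_mul (hCle n) (pow_le_pow_left₀ h1 h2 n) (by positivity) zero_le_one
      _ = (κ^2)^n := one_mul _
  have hvol : (volume (Set.Ioc (0:ℝ) (π/2))).toReal = π/2 := by
    rw [Real.volume_Ioc, sub_zero, ENNReal.toReal_ofReal hp2]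
  -- summability of integrals of norms
  have hSum : Summable fun n : ℕ =>
      ∫ t in Set.Ioc (0:ℝ) (π/2), ‖C n * (κ^2 * Real.sin t ^ 2)^n‖ := by
    apply Summable.of_nonneg_of_le
      (fun n => integral_nonneg fun t => norm_nonneg _)
      (fun n => ?_)
      (((summable_geometric_of_lt_one hK0 hK1).mul_left (π/2)))
    calc (∫ t in Set.Ioc (0:ℝ) (π/2), ‖C n * (κ^2 * Real.sin t ^ 2)^n‖)
        ≤ ∫ _ in Set.Ioc (0:ℝ) (π/2), (κ^2)^n :=
          setIntegral_mono_on ((hInt n).norm)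
            (integrableOn_const (by rw [Real.volume_Ioc]; exact ENNReal.ofReal_ne_top))
            measurableSet_Ioc (hptw n)
      _ = (π/2) * (κ^2)^n := by rw [setIntegral_const, smul_eq_mul, measureReal_def, hvol]
  -- main computation
  rw [intervalIntegral.integral_of_le hp2]
  simp only [hyp]
  rw [← MeasureTheory.integral_tsum_of_summable_integral_norm hInt hSum]
  rw [← tsum_mul_left]
  refine tsum_congr fun n => ?_
  have hrw : ∀ t : ℝ, C n * (κ^2 * Real.sin t ^ 2)^n
      = (C n * (κ^2)^n) * Real.sin t ^ (2*n) := by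
    intro t
    rw [mul_pow, ← pow_mul]
    ring
  calc (∫ t in Set.Ioc (0:ℝ) (π/2), C n * (κ^2 * Real.sin t ^ 2)^n)
      = ∫ t in Set.Ioc (0:ℝ) (π/2), (C n * (κ^2)^n) * Real.sin t ^ (2*n) := by
        simp_rw [hrw]
    _ = (C n * (κ^2)^n) * ∫ t in Set.Ioc (0:ℝ) (π/2), Real.sin t ^ (2*n) := by
        rw [MeasureTheory.integral_const_mul]
    _ = (C n * (κ^2)^n) * ∫ t in (0:ℝ)..(π/2), Real.sin t ^ (2*n) := by
        rw [intervalIntegral.integral_of_le hp2]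
    _ = (C n * (κ^2)^n) * ((π/2) * ∏ i ∈ range n, (2*(i:ℝ)+1)/(2*i+2)) := by
        rw [sin_pow_int]
    _ = (π/2) * ((C n * ∏ i ∈ range n, (2*(i:ℝ)+1)/(2*i+2)) * (κ^2)^n) := by ring
    _ = (π/2) * ((∏ i ∈ range n, (1/4 + (i:ℝ))) * (∏ i ∈ range n, (3/4 + (i:ℝ))) /
          ((∏ i ∈ range n, (1 + (i:ℝ))) * (n.factorial : ℝ)) * (κ^2)^n) := by
        rw [hC, coeff_identity]
end
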